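/- For every n ≥ 0 there exists an indecomposable representation M of Q with dimension vector (n, n+1, n+1, n+1) together with a short exact sequence of representations 0 → P₄ⁿ⁺¹ → P₂ ⊕ P₃ ⊕ P₁ⁿ → M → 0. -/

import Mathlib

variable (k : Type) [Field k]

/-- A finite-dimensional representation of the quiver `Q` with vertices `1,2,3,4`
and arrows `a : 1 → 2`, `b : 1 → 3`, `c : 2 → 4`, `d : 3 → 4`. -/
structure QRep where
  V1 : Type
  V2 : Type
  V3 : Type
  V4 : Type
  [acg1 : AddCommGroup V1]
  [acg2 : AddCommGroup V2]
  [acg3 : AddCommGroup V3]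
  [acg4 : AddCommGroup V4]
  [mod1 : Module k V1]
  [mod2 : Module k V2]
  [mod3 : Module k V3]
  [mod4 : Module k V4]
  [fin1 : FiniteDimensional k V1]
  [fin2 : FiniteDimensional k V2]
  [fin3 : FiniteDimensional k V3]
  [fin4 : FiniteDimensional k V4]
  ma : V1 →ₗ[k] V2
  mb : V1 →ₗ[k] V3
  mc : V2 →ₗ[k] V4
  md : V3 →ₗ[k] V4

attribute [instance] QRep.acg1 QRep.acg2 QRep.acg3 QRep.acg4
  QRep.mod1 QRep.mod2 QRep.mod3 QRep.mod4
  QRep.fin1 QRep.fin2 QRep.fin3 QRep.fin4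

variable {k}

/-- Morphisms of representations of `Q`. -/
@[ext]
structure QHom (M N : QRep k) where
  f1 : M.V1 →ₗ[k] N.V1
  f2 : M.V2 →ₗ[k] N.V2
  f3 : M.V3 →ₗ[k] N.V3
  f4 : M.V4 →ₗ[k] N.V4
  comm_a : f2 ∘ₗ M.ma = N.ma ∘ₗ f1
  comm_b : f3 ∘ₗ M.mb = N.mb ∘ₗ f1
  comm_c : f4 ∘ₗ M.mc = N.mc ∘ₗ f2
  comm_d : f4 ∘ₗ M.md = N.md ∘ₗ f3

/-- Two representations are isomorphic iff there is a morphism all of whose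
components are bijective. -/
def QIso (M N : QRep k) : Prop :=
  ∃ f : QHom M N, Function.Bijective f.f1 ∧ Function.Bijective f.f2 ∧
    Function.Bijective f.f3 ∧ Function.Bijective f.f4

/-- The zero representation(s). -/
def QRep.IsZeroRep (M : QRep k) : Prop :=
  Subsingleton M.V1 ∧ Subsingleton M.V2 ∧ Subsingleton M.V3 ∧ Subsingleton M.V4

/-- Vertexwise direct sum of representations. -/
def QRep.dsum (M N : QRep k) : QRep k where
  V1 := M.V1 × N.V1
  V2 := M.V2 × N.V2
  V3 := M.V3 × N.V3
  V4 := M.V4 × N.V4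
  ma := M.ma.prodMap N.ma
  mb := M.mb.prodMap N.mb
  mc := M.mc.prodMap N.mc
  md := M.md.prodMap N.md

/-- Direct sum of `n` copies of a representation. -/
def QRep.dpow (M : QRep k) (n : ℕ) : QRep k where
  V1 := Fin n → M.V1
  V2 := Fin n → M.V2
  V3 := Fin n → M.V3
  V4 := Fin n → M.V4
  ma := M.ma.compLeft (Fin n)
  mb := M.mb.compLeft (Fin n)
  mc := M.mc.compLeft (Fin n)
  md := M.md.compLeft (Fin n)

/-- A representation is indecomposable if it is nonzero and not isomorphic to a
direct sum of two nonzero representations. -/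
def QRep.Indecomposable (M : QRep k) : Prop :=
  ¬ M.IsZeroRep ∧ ∀ A B : QRep k, QIso M (A.dsum B) → A.IsZeroRep ∨ B.IsZeroRep

/-- `0 → A → B → C → 0` is short exact (vertexwise). -/
def QShortExact {A B C : QRep k} (f : QHom A B) (g : QHom B C) : Prop :=
  (Function.Injective f.f1 ∧ Function.Injective f.f2 ∧
    Function.Injective f.f3 ∧ Function.Injective f.f4) ∧
  (Function.Surjective g.f1 ∧ Function.Surjective g.f2 ∧
    Function.Surjective g.f3 ∧ Function.Surjective g.f4) ∧
  (LinearMap.range f.f1 = LinearMap.ker g.f1 ∧ LinearMap.range f.f2 = LinearMap.ker g.f2 ∧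
    LinearMap.range f.f3 = LinearMap.ker g.f3 ∧ LinearMap.range f.f4 = LinearMap.ker g.f4)

variable (k)

/-- The `n×n` Jordan block with eigenvalue `lam`, as a linear endomorphism of `kⁿ`. -/
def jordan (n : ℕ) (lam : k) : (Fin n → k) →ₗ[k] (Fin n → k) :=
  Matrix.mulVecLin (Matrix.of fun i j : Fin n =>
    if i = j then lam else if (i : ℕ) + 1 = (j : ℕ) then 1 else 0)

/-- The representation `M_n(λ) = (kⁿ,kⁿ,kⁿ,kⁿ; id,id,id,J_n(λ))`. -/
def Mlam (n : ℕ) (lam : k) : QRep k where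
  V1 := Fin n → k
  V2 := Fin n → k
  V3 := Fin n → k
  V4 := Fin n → k
  ma := LinearMap.id
  mb := LinearMap.id
  mc := LinearMap.id
  md := jordan k n lam

/-- The indecomposable projective `P₁ = (k,k,k,k²)`. -/
def P1 : QRep k where
  V1 := k
  V2 := k
  V3 := k
  V4 := k × k
  ma := LinearMap.id
  mb := LinearMap.id
  mc := LinearMap.inl k k k
  md := LinearMap.inr k k k

/-- The indecomposable projective `P₂ = (0,k,0,k)`. -/
def P2 : QRep k where
  V1 := Fin 0 → k
  V2 := k
  V3 := Fin 0 → k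
  V4 := k
  ma := 0
  mb := 0
  mc := LinearMap.id
  md := 0

/-- The indecomposable projective `P₃ = (0,0,k,k)`. -/
def P3 : QRep k where
  V1 := Fin 0 → k
  V2 := Fin 0 → k
  V3 := k
  V4 := k
  ma := 0
  mb := 0
  mc := 0
  md := LinearMap.id

/-- The indecomposable projective `P₄ = (0,0,0,k)`. -/
def P4 : QRep k where
  V1 := Fin 0 → k
  V2 := Fin 0 → k
  V3 := Fin 0 → k
  V4 := k
  ma := 0
  mb := 0
  mc := 0
  md := 0


/-! ### Auxiliary material for `stmt7` -/

attribute [reducible] QRep.dsum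

namespace Stmt7Aux

variable {k : Type} [Field k]

lemma single_snoc {n : ℕ} (j : Fin n) :
    (Fin.snoc (Pi.single j (1:k)) (0:k) : Fin (n+1) → k) = Pi.single j.castSucc 1 := by
  funext mm
  refine Fin.lastCases ?_ (fun i => ?_) mm
  · simp [Pi.single_apply, (Fin.castSucc_lt_last j).ne']
  · simp [Pi.single_apply, Fin.castSucc_inj]

lemma single_cons {n : ℕ} (j : Fin n) :
    (Fin.cons (0:k) (Pi.single j (1:k)) : Fin (n+1) → k) = Pi.single j.succ 1 := by
  funext mm
  refine Fin.cases ?_ (fun i => ?_) mm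
  · simp [Pi.single_apply, (Fin.succ_ne_zero j).symm]
  · simp [Pi.single_apply, Fin.succ_inj]

lemma snoc_smul {n : ℕ} (c : k) (v : Fin n → k) :
    (Fin.snoc (c • v) (0:k) : Fin (n+1) → k) = c • (Fin.snoc v (0:k) : Fin (n+1) → k) := by
  funext mm
  refine Fin.lastCases ?_ (fun i => ?_) mm <;> simp

lemma cons_smul {n : ℕ} (c : k) (v : Fin n → k) :
    (Fin.cons (0:k) (c • v) : Fin (n+1) → k) = c • (Fin.cons (0:k) v : Fin (n+1) → k) := by
  funext mm
  refine Fin.cases ?_ (fun i => ?_) mm <;> simp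

lemma smul_of_single {m : ℕ} (g : (Fin m → k) →ₗ[k] (Fin m → k)) (c : k)
    (h : ∀ j, g (Pi.single j 1) = c • (Pi.single j 1 : Fin m → k)) (x : Fin m → k) : g x = c • x := by
  have hx : ∑ j, (Pi.single j (x j) : Fin m → k) = x := Finset.univ_sum_single x
  calc g x = g (∑ j, (Pi.single j (x j) : Fin m → k)) := by rw [hx]
    _ = ∑ j, g (Pi.single j (x j) : Fin m → k) := map_sum _ _ _
    _ = ∑ j, c • (Pi.single j (x j) : Fin m → k) := by
        refine Finset.sum_congr rfl fun j _ => ?_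
        have h1 : (Pi.single j (x j) : Fin m → k) = x j • (Pi.single j 1 : Fin m → k) := by
          rw [← Pi.single_smul, smul_eq_mul, mul_one]
        rw [h1, map_smul, h, smul_comm]
    _ = c • x := by rw [← Finset.smul_sum, hx]

/-- matrix entries of an endomorphism of `k^N`, with junk value `0` out of range -/
def ent {N : ℕ} (f : (Fin N → k) →ₗ[k] (Fin N → k)) (a b : ℕ) : k :=
  if h : a < N ∧ b < N then f (Pi.single ⟨b, h.2⟩ 1) ⟨a, h.1⟩ else 0

theorem scalar {n : ℕ} (f1 : (Fin n → k) →ₗ[k] (Fin n → k))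
    (f4 : (Fin (n+1) → k) →ₗ[k] (Fin (n+1) → k))
    (hS : ∀ x, f4 (Fin.snoc x 0) = Fin.snoc (f1 x) 0)
    (hT : ∀ x, f4 (Fin.cons 0 x) = Fin.cons 0 (f1 x)) :
    ∃ c : k, (∀ x, f1 x = c • x) ∧ (∀ v, f4 v = c • v) := by
  cases n with
  | zero =>
    refine ⟨f4 (Pi.single 0 1) 0, fun x => ?_, fun v => ?_⟩
    · rw [show x = 0 from Subsingleton.elim x 0, map_zero, smul_zero]
    · refine smul_of_single f4 _ (fun j => ?_) v
      have hj : j = 0 := Fin.ext (by omega)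
      subst hj
      funext i
      have hi : i = 0 := Fin.ext (by omega)
      subst hi
      simp
  | succ m =>
    have hcol : ∀ j j' : Fin (m+1), (j:ℕ) = (j':ℕ)+1 →
        (Fin.snoc (f1 (Pi.single j 1)) (0:k) : Fin (m+2) → k)
          = Fin.cons (0:k) (f1 (Pi.single j' 1)) := by
      intro j j' hjj
      have hcs : j.castSucc = j'.succ := Fin.ext (by simpa using hjj)
      rw [← hS, ← hT, single_snoc, single_cons, hcs]
    have e1 : ∀ j j' : Fin (m+1), (j:ℕ) = (j':ℕ)+1 → f1 (Pi.single j 1) 0 = 0 := by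
      intro j j' h
      have hc := congrFun (hcol j j' h) (Fin.castSucc 0)
      rw [Fin.snoc_castSucc, Fin.castSucc_zero, Fin.cons_zero] at hc
      exact hc
    have e2 : ∀ j j' : Fin (m+1), (j:ℕ) = (j':ℕ)+1 →
        f1 (Pi.single j' 1) (Fin.last m) = 0 := by
      intro j j' h
      have hc := congrFun (hcol j j' h) (Fin.last (m+1))
      rw [Fin.snoc_last, ← Fin.succ_last, Fin.cons_succ] at hc
      exact hc.symm
    have e3 : ∀ j j' i i' : Fin (m+1), (j:ℕ)=(j':ℕ)+1 → (i:ℕ)=(i':ℕ)+1 →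
        f1 (Pi.single j 1) i = f1 (Pi.single j' 1) i' := by
      intro j j' i i' hj hi
      have hc := congrFun (hcol j j' hj) (Fin.castSucc i)
      rw [Fin.snoc_castSucc,
        show Fin.castSucc i = Fin.succ i' from Fin.ext (by simpa using hi),
        Fin.cons_succ] at hc
      exact hc
    have entof : ∀ i j : Fin (m+1), ent f1 (i:ℕ) (j:ℕ) = f1 (Pi.single j 1) i := by
      intro i j
      unfold ent
      rw [dif_pos ⟨i.isLt, j.isLt⟩]
    have hE3 : ∀ a b : ℕ, a+1 < m+1 → b+1 < m+1 → ent f1 (a+1) (b+1) = ent f1 a b := by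
      intro a b ha hb
      unfold ent
      rw [dif_pos (⟨ha, hb⟩ : a+1 < m+1 ∧ b+1 < m+1),
        dif_pos (⟨by omega, by omega⟩ : a < m+1 ∧ b < m+1)]
      exact e3 ⟨b+1, hb⟩ ⟨b, by omega⟩ ⟨a+1, ha⟩ ⟨a, by omega⟩ rfl rfl
    have hE1 : ∀ b, 0 < b → b < m+1 → ent f1 0 b = 0 := by
      intro b hb0 hb
      unfold ent
      rw [dif_pos (⟨by omega, hb⟩ : 0 < m+1 ∧ b < m+1)]
      have h := e1 ⟨b, hb⟩ ⟨b-1, by omega⟩ (Nat.succ_pred_eq_of_pos hb0).symm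
      rw [show (⟨0, by omega⟩ : Fin (m+1)) = 0 from Fin.ext (by simp)]
      exact h
    have hE2 : ∀ b, b + 1 < m+1 → ent f1 m b = 0 := by
      intro b hb
      unfold ent
      rw [dif_pos (⟨by omega, by omega⟩ : m < m+1 ∧ b < m+1)]
      have h := e2 ⟨b+1, hb⟩ ⟨b, by omega⟩ rfl
      rw [show (⟨m, by omega⟩ : Fin (m+1)) = Fin.last m from Fin.ext (by simp)]
      exact h
    have shift : ∀ d a b : ℕ, a + d < m+1 → b + d < m+1 →
        ent f1 (a+d) (b+d) = ent f1 a b := by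
      intro d
      induction d with
      | zero => intro a b _ _; rfl
      | succ dd ih =>
        intro a b ha hb
        exact (hE3 (a+dd) (b+dd) ha hb).trans (ih a b (by omega) (by omega))
    have main : ∀ a b : ℕ, a < m+1 → b < m+1 →
        ent f1 a b = if a = b then ent f1 0 0 else 0 := by
      intro a b ha hb
      rcases lt_trichotomy a b with h | h | h
      · rw [if_neg (by omega)]
        calc ent f1 a b = ent f1 (0+a) ((b-a)+a) := by
              rw [Nat.zero_add, Nat.sub_add_cancel (le_of_lt h)]
          _ = ent f1 0 (b-a) := shift a 0 (b-a) (by omega) (by omega)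
          _ = 0 := hE1 _ (by omega) (by omega)
      · subst h
        rw [if_pos rfl]
        calc ent f1 a a = ent f1 (0+a) (0+a) := by rw [Nat.zero_add]
          _ = ent f1 0 0 := shift a 0 0 (by omega) (by omega)
      · rw [if_neg (by omega)]
        have h1 : ent f1 (a + (m - a)) (b + (m - a)) = ent f1 a b :=
          shift (m-a) a b (by omega) (by omega)
        rw [← h1, show a + (m - a) = m from by omega]
        exact hE2 _ (by omega)
    set c : k := ent f1 0 0 with hcdef
    have hsingle1 : ∀ j : Fin (m+1), f1 (Pi.single j 1) = c • (Pi.single j 1 : Fin (m+1) → k) := by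
      intro j
      funext i
      rw [← entof i j, main (i:ℕ) (j:ℕ) i.isLt j.isLt]
      by_cases hij : i = j
      · subst hij; rw [if_pos rfl]; simp
      · rw [if_neg (fun hh => hij (Fin.ext hh))]
        simp [Pi.single_apply, hij]
    have h1all : ∀ x, f1 x = c • x := smul_of_single f1 c hsingle1
    have hsingle4 : ∀ mm : Fin (m+2), f4 (Pi.single mm 1) = c • (Pi.single mm 1 : Fin (m+2) → k) := by
      intro mm
      refine Fin.cases ?_ (fun j => ?_) mm
      · have h0 : (Pi.single 0 1 : Fin (m+2) → k)
            = Fin.snoc (Pi.single (0:Fin (m+1)) 1 : Fin (m+1) → k) 0 := by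
          rw [single_snoc, Fin.castSucc_zero]
        rw [h0, hS, h1all, snoc_smul, ← h0]
      · rw [← single_cons, hT, h1all, cons_smul, single_cons]
    exact ⟨c, h1all, smul_of_single f4 c hsingle4⟩

variable (k)

/-- `snoc` as a linear map. -/
def snocL (n : ℕ) : ((Fin n → k) × k) →ₗ[k] (Fin (n+1) → k) where
  toFun p := Fin.snoc p.1 p.2
  map_add' p q := by
    funext mm
    refine Fin.lastCases ?_ (fun i => ?_) mm <;> simp
  map_smul' c p := by
    funext mm
    refine Fin.lastCases ?_ (fun i => ?_) mm <;> simp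

/-- `cons` as a linear map. -/
def consL (n : ℕ) : (k × (Fin n → k)) →ₗ[k] (Fin (n+1) → k) where
  toFun p := Fin.cons p.1 p.2
  map_add' p q := by
    funext mm
    refine Fin.cases ?_ (fun i => ?_) mm <;> simp
  map_smul' c p := by
    funext mm
    refine Fin.cases ?_ (fun i => ?_) mm <;> simp

/-- The indecomposable representation with dimension vector `(n, n+1, n+1, n+1)`. -/
abbrev MM (n : ℕ) : QRep k where
  V1 := Fin n → k
  V2 := Fin (n+1) → k
  V3 := Fin (n+1) → k
  V4 := Fin (n+1) → k
  ma := snocL k n ∘ₗ LinearMap.prod LinearMap.id 0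
  mb := consL k n ∘ₗ LinearMap.prod 0 LinearMap.id
  mc := LinearMap.id
  md := LinearMap.id

variable {k}

lemma MM_ma_apply (n : ℕ) (x : Fin n → k) : (MM k n).ma x = Fin.snoc x 0 := rfl
lemma MM_mb_apply (n : ℕ) (x : Fin n → k) : (MM k n).mb x = Fin.cons 0 x := rfl

theorem MM_indec (n : ℕ) : (MM k n).Indecomposable := by
  constructor
  · rintro ⟨-, -, -, h4⟩
    have h : (fun _ => (1:k)) = (fun (_ : Fin (n+1)) => (0:k)) :=
      @Subsingleton.elim _ h4 _ _
    exact one_ne_zero (congrFun h 0)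
  · rintro A B ⟨φ, h1, h2, h3, h4⟩
    set E1 := LinearEquiv.ofBijective φ.f1 h1 with hE1
    set E2 := LinearEquiv.ofBijective φ.f2 h2 with hE2
    set E3 := LinearEquiv.ofBijective φ.f3 h3 with hE3
    set E4 := LinearEquiv.ofBijective φ.f4 h4 with hE4
    set p1 : A.V1 × B.V1 →ₗ[k] A.V1 × B.V1 := (LinearMap.fst k A.V1 B.V1).prod 0 with hp1
    set p2 : A.V2 × B.V2 →ₗ[k] A.V2 × B.V2 := (LinearMap.fst k A.V2 B.V2).prod 0 with hp2
    set p3 : A.V3 × B.V3 →ₗ[k] A.V3 × B.V3 := (LinearMap.fst k A.V3 B.V3).prod 0 with hp3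
    set p4 : A.V4 × B.V4 →ₗ[k] A.V4 × B.V4 := (LinearMap.fst k A.V4 B.V4).prod 0 with hp4
    set e1 : (Fin n → k) →ₗ[k] (Fin n → k) :=
      E1.symm.toLinearMap ∘ₗ p1 ∘ₗ φ.f1 with he1
    set e2 : (Fin (n+1) → k) →ₗ[k] (Fin (n+1) → k) :=
      E2.symm.toLinearMap ∘ₗ p2 ∘ₗ φ.f2 with he2
    set e3 : (Fin (n+1) → k) →ₗ[k] (Fin (n+1) → k) :=
      E3.symm.toLinearMap ∘ₗ p3 ∘ₗ φ.f3 with he3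
    set e4 : (Fin (n+1) → k) →ₗ[k] (Fin (n+1) → k) :=
      E4.symm.toLinearMap ∘ₗ p4 ∘ₗ φ.f4 with he4
    have hφψ1 : ∀ y, φ.f1 (E1.symm y) = y := fun y => E1.apply_symm_apply y
    have hφψ2 : ∀ y, φ.f2 (E2.symm y) = y := fun y => E2.apply_symm_apply y
    have hφψ3 : ∀ y, φ.f3 (E3.symm y) = y := fun y => E3.apply_symm_apply y
    have hφψ4 : ∀ y, φ.f4 (E4.symm y) = y := fun y => E4.apply_symm_apply y
    have hψφ1 : ∀ x, E1.symm (φ.f1 x) = x := fun x => E1.symm_apply_apply x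
    have hψφ2 : ∀ x, E2.symm (φ.f2 x) = x := fun x => E2.symm_apply_apply x
    have hψφ3 : ∀ x, E3.symm (φ.f3 x) = x := fun x => E3.symm_apply_apply x
    have hψφ4 : ∀ x, E4.symm (φ.f4 x) = x := fun x => E4.symm_apply_apply x
    -- pointwise commutation facts for φ
    have hca : ∀ x, φ.f2 ((MM k n).ma x) = (A.dsum B).ma (φ.f1 x) :=
      fun x => LinearMap.congr_fun φ.comm_a x
    have hcb : ∀ x, φ.f3 ((MM k n).mb x) = (A.dsum B).mb (φ.f1 x) :=
      fun x => LinearMap.congr_fun φ.comm_b x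
    have hcc : ∀ x, φ.f4 x = (A.dsum B).mc (φ.f2 x) :=
      fun x => LinearMap.congr_fun φ.comm_c x
    have hcd : ∀ x, φ.f4 x = (A.dsum B).md (φ.f3 x) :=
      fun x => LinearMap.congr_fun φ.comm_d x
    -- projections commute with the structure maps of the direct sum
    have hpa : ∀ y, p2 ((A.dsum B).ma y) = (A.dsum B).ma (p1 y) := by
      intro y; simp [hp1, hp2, QRep.dsum]
    have hpb : ∀ y, p3 ((A.dsum B).mb y) = (A.dsum B).mb (p1 y) := by
      intro y; simp [hp1, hp3, QRep.dsum]
    have hpc : ∀ y, p4 ((A.dsum B).mc y) = (A.dsum B).mc (p2 y) := by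
      intro y; simp [hp2, hp4, QRep.dsum]
    have hpd : ∀ y, p4 ((A.dsum B).md y) = (A.dsum B).md (p3 y) := by
      intro y; simp [hp3, hp4, QRep.dsum]
    -- inverse commutation
    have hψa : ∀ y, E2.symm ((A.dsum B).ma y) = (MM k n).ma (E1.symm y) := by
      intro y
      conv_lhs => rw [← hφψ1 y, ← hca, hψφ2]
    have hψb : ∀ y, E3.symm ((A.dsum B).mb y) = (MM k n).mb (E1.symm y) := by
      intro y
      conv_lhs => rw [← hφψ1 y, ← hcb, hψφ3]
    have hψc : ∀ y, E4.symm ((A.dsum B).mc y) = E2.symm y := by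
      intro y
      conv_lhs => rw [← hφψ2 y, ← hcc, hψφ4]
    have hψd : ∀ y, E4.symm ((A.dsum B).md y) = E3.symm y := by
      intro y
      conv_lhs => rw [← hφψ3 y, ← hcd, hψφ4]
    -- e₄ agrees with e₂ and e₃
    have he42 : ∀ v, e4 v = e2 v := by
      intro v
      show E4.symm (p4 (φ.f4 v)) = E2.symm (p2 (φ.f2 v))
      rw [hcc v, hpc, hψc]
    have he43 : ∀ v, e4 v = e3 v := by
      intro v
      show E4.symm (p4 (φ.f4 v)) = E3.symm (p3 (φ.f3 v))
      rw [hcd v, hpd, hψd]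
    -- e commutes with the structure maps
    have heS : ∀ x, e2 ((MM k n).ma x) = (MM k n).ma (e1 x) := by
      intro x
      show E2.symm (p2 (φ.f2 ((MM k n).ma x))) = (MM k n).ma (E1.symm (p1 (φ.f1 x)))
      rw [hca x, hpa, hψa]
    have heT : ∀ x, e3 ((MM k n).mb x) = (MM k n).mb (e1 x) := by
      intro x
      show E3.symm (p3 (φ.f3 ((MM k n).mb x))) = (MM k n).mb (E1.symm (p1 (φ.f1 x)))
      rw [hcb x, hpb, hψb]
    have hSx : ∀ x : Fin n → k, e4 (Fin.snoc x 0) = Fin.snoc (e1 x) 0 := by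
      intro x
      exact (he42 ((MM k n).ma x)).trans (heS x)
    have hTx : ∀ x : Fin n → k, e4 (Fin.cons 0 x) = Fin.cons 0 (e1 x) := by
      intro x
      exact (he43 ((MM k n).mb x)).trans (heT x)
    obtain ⟨c, hc1, hc4⟩ := scalar e1 e4 hSx hTx
    -- idempotency of e4
    have hp4p4 : ∀ y, p4 (p4 y) = p4 y := by
      intro y; simp [hp4]
    have hid : ∀ v : Fin (n+1) → k, e4 (e4 v) = e4 v := by
      intro v
      show E4.symm (p4 (φ.f4 (E4.symm (p4 (φ.f4 v))))) = E4.symm (p4 (φ.f4 v))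
      rw [hφψ4, hp4p4]
    have hcc' : c * c = c := by
      have v : Fin (n+1) → k := fun _ => 1
      have hkey : c • (c • (fun _ : Fin (n+1) => (1:k)))
          = c • (fun _ : Fin (n+1) => (1:k)) := by
        calc c • (c • (fun _ : Fin (n+1) => (1:k)))
            = c • e4 (fun _ : Fin (n+1) => (1:k)) := by rw [hc4]
          _ = e4 (e4 (fun _ : Fin (n+1) => (1:k))) := (hc4 _).symm
          _ = e4 (fun _ : Fin (n+1) => (1:k)) := hid _
          _ = c • (fun _ : Fin (n+1) => (1:k)) := hc4 _
      have := congrFun hkey 0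
      simpa using this
    have hc01 : c = 0 ∨ c = 1 := by
      have hfac : c * (c - 1) = 0 := by rw [mul_sub, mul_one, hcc', sub_self]
      rcases mul_eq_zero.mp hfac with h | h
      · exact Or.inl h
      · exact Or.inr (sub_eq_zero.mp h)
    -- the four component facts, for both cases
    rcases hc01 with hc | hc
    · left
      subst hc
      have z4 : ∀ a : A.V4, a = 0 := by
        intro a
        obtain ⟨v, hv⟩ := h4.2 (a, 0)
        have h : E4.symm (p4 (φ.f4 v)) = 0 := by
          have h0 := hc4 v; rw [zero_smul] at h0; exact h0
        have h' : p4 (φ.f4 v) = 0 := by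
          have h2 := congrArg E4 h
          rwa [E4.apply_symm_apply, map_zero] at h2
        rw [hv] at h'
        have := congrArg Prod.fst h'
        simpa [hp4] using this
      have z2 : ∀ a : A.V2, a = 0 := by
        intro a
        obtain ⟨v, hv⟩ := h2.2 (a, 0)
        have h : E2.symm (p2 (φ.f2 v)) = 0 := by
          have h0 := (he42 v).symm.trans (hc4 v); rw [zero_smul] at h0; exact h0
        have h' : p2 (φ.f2 v) = 0 := by
          have h2 := congrArg E2 h
          rwa [E2.apply_symm_apply, map_zero] at h2
        rw [hv] at h'
        have := congrArg Prod.fst h'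
        simpa [hp2] using this
      have z3 : ∀ a : A.V3, a = 0 := by
        intro a
        obtain ⟨v, hv⟩ := h3.2 (a, 0)
        have h : E3.symm (p3 (φ.f3 v)) = 0 := by
          have h0 := (he43 v).symm.trans (hc4 v); rw [zero_smul] at h0; exact h0
        have h' : p3 (φ.f3 v) = 0 := by
          have h2 := congrArg E3 h
          rwa [E3.apply_symm_apply, map_zero] at h2
        rw [hv] at h'
        have := congrArg Prod.fst h'
        simpa [hp3] using this
      have z1 : ∀ a : A.V1, a = 0 := by
        intro a
        obtain ⟨v, hv⟩ := h1.2 (a, 0)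
        have h : E1.symm (p1 (φ.f1 v)) = 0 := by
          have h0 := hc1 v; rw [zero_smul] at h0; exact h0
        have h' : p1 (φ.f1 v) = 0 := by
          have h2 := congrArg E1 h
          rwa [E1.apply_symm_apply, map_zero] at h2
        rw [hv] at h'
        have := congrArg Prod.fst h'
        simpa [hp1] using this
      exact ⟨⟨fun a b => by rw [z1 a, z1 b]⟩, ⟨fun a b => by rw [z2 a, z2 b]⟩,
        ⟨fun a b => by rw [z3 a, z3 b]⟩, ⟨fun a b => by rw [z4 a, z4 b]⟩⟩
    · right
      subst hc
      have z4 : ∀ b : B.V4, b = 0 := by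
        intro b
        obtain ⟨v, hv⟩ := h4.2 (0, b)
        have h : E4.symm (p4 (φ.f4 v)) = v := by
          have h0 := hc4 v; rw [one_smul] at h0; exact h0
        have h' : p4 (φ.f4 v) = φ.f4 v := by
          have h2 := congrArg E4 h
          rwa [E4.apply_symm_apply] at h2
        rw [hv] at h'
        have := congrArg Prod.snd h'
        simpa [hp4] using this.symm
      have z2 : ∀ b : B.V2, b = 0 := by
        intro b
        obtain ⟨v, hv⟩ := h2.2 (0, b)
        have h : E2.symm (p2 (φ.f2 v)) = v := by
          have h0 := (he42 v).symm.trans (hc4 v); rw [one_smul] at h0; exact h0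
        have h' : p2 (φ.f2 v) = φ.f2 v := by
          have h2 := congrArg E2 h
          rwa [E2.apply_symm_apply] at h2
        rw [hv] at h'
        have := congrArg Prod.snd h'
        simpa [hp2] using this.symm
      have z3 : ∀ b : B.V3, b = 0 := by
        intro b
        obtain ⟨v, hv⟩ := h3.2 (0, b)
        have h : E3.symm (p3 (φ.f3 v)) = v := by
          have h0 := (he43 v).symm.trans (hc4 v); rw [one_smul] at h0; exact h0
        have h' : p3 (φ.f3 v) = φ.f3 v := by
          have h2 := congrArg E3 h
          rwa [E3.apply_symm_apply] at h2
        rw [hv] at h'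
        have := congrArg Prod.snd h'
        simpa [hp3] using this.symm
      have z1 : ∀ b : B.V1, b = 0 := by
        intro b
        obtain ⟨v, hv⟩ := h1.2 (0, b)
        have h : E1.symm (p1 (φ.f1 v)) = v := by
          have h0 := hc1 v; rw [one_smul] at h0; exact h0
        have h' : p1 (φ.f1 v) = φ.f1 v := by
          have h2 := congrArg E1 h
          rwa [E1.apply_symm_apply] at h2
        rw [hv] at h'
        have := congrArg Prod.snd h'
        simpa [hp1] using this.symm
      exact ⟨⟨fun a b => by rw [z1 a, z1 b]⟩, ⟨fun a b => by rw [z2 a, z2 b]⟩,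
        ⟨fun a b => by rw [z3 a, z3 b]⟩, ⟨fun a b => by rw [z4 a, z4 b]⟩⟩


/-! ### The short exact sequence -/

variable (k) (n : ℕ)

def gg1 : ((Fin 0 → k) × ((Fin 0 → k) × (Fin n → k))) →ₗ[k] (Fin n → k) :=
  LinearMap.snd k (Fin 0 → k) (Fin n → k) ∘ₗ
    LinearMap.snd k (Fin 0 → k) ((Fin 0 → k) × (Fin n → k))

def gg2 : (k × ((Fin 0 → k) × (Fin n → k))) →ₗ[k] (Fin (n+1) → k) :=
  snocL k n ∘ₗ LinearMap.prod
    (LinearMap.snd k (Fin 0 → k) (Fin n → k) ∘ₗ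
      LinearMap.snd k k ((Fin 0 → k) × (Fin n → k)))
    (LinearMap.fst k k ((Fin 0 → k) × (Fin n → k)))

def gg3 : ((Fin 0 → k) × (k × (Fin n → k))) →ₗ[k] (Fin (n+1) → k) :=
  consL k n ∘ₗ LinearMap.prod
    (LinearMap.fst k k (Fin n → k) ∘ₗ LinearMap.snd k (Fin 0 → k) (k × (Fin n → k)))
    (LinearMap.snd k k (Fin n → k) ∘ₗ LinearMap.snd k (Fin 0 → k) (k × (Fin n → k)))

def gg4 : (k × (k × (Fin n → k × k))) →ₗ[k] (Fin (n+1) → k) :=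
  (snocL k n ∘ₗ LinearMap.prod
    ((LinearMap.fst k k k).compLeft (Fin n) ∘ₗ
      (LinearMap.snd k k (Fin n → k × k) ∘ₗ LinearMap.snd k k (k × (Fin n → k × k))))
    (LinearMap.fst k k (k × (Fin n → k × k))))
  + (consL k n ∘ₗ LinearMap.prod
    (LinearMap.fst k k (Fin n → k × k) ∘ₗ LinearMap.snd k k (k × (Fin n → k × k)))
    ((LinearMap.snd k k k).compLeft (Fin n) ∘ₗ
      (LinearMap.snd k k (Fin n → k × k) ∘ₗ LinearMap.snd k k (k × (Fin n → k × k)))))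

def ff4 : (Fin (n+1) → k) →ₗ[k] (k × (k × (Fin n → k × k))) :=
  LinearMap.prod (LinearMap.proj (Fin.last n))
    (LinearMap.prod (-(LinearMap.proj (0 : Fin (n+1))))
      (LinearMap.pi fun i : Fin n =>
        LinearMap.prod (LinearMap.proj i.castSucc) (-(LinearMap.proj i.succ))))

lemma cons_zero_zero : (Fin.cons (0:k) (fun _ : Fin n => (0:k)) : Fin (n+1) → k) = 0 := by
  funext mm
  refine Fin.cases ?_ (fun i => ?_) mm <;> simp

lemma snoc_zero_zero : (Fin.snoc (fun _ : Fin n => (0:k)) (0:k) : Fin (n+1) → k) = 0 := by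
  funext mm
  refine Fin.lastCases ?_ (fun i => ?_) mm <;> simp

/-- The map `P₄ⁿ⁺¹ → P₂ ⊕ P₃ ⊕ P₁ⁿ`. -/
def ffHom : QHom ((P4 k).dpow (n+1)) ((P2 k).dsum ((P3 k).dsum ((P1 k).dpow n))) where
  f1 := 0
  f2 := 0
  f3 := 0
  f4 := ff4 k n
  comm_a := by
    haveI : Subsingleton (((P4 k).dpow (n+1)).V1) :=
      (inferInstance : Subsingleton (Fin (n+1) → Fin 0 → k))
    haveI : Subsingleton (((P4 k).dpow (n+1)).V2) :=
      (inferInstance : Subsingleton (Fin (n+1) → Fin 0 → k))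
    haveI : Subsingleton (((P4 k).dpow (n+1)).V3) :=
      (inferInstance : Subsingleton (Fin (n+1) → Fin 0 → k))
    apply LinearMap.ext
    intro w
    rw [show w = 0 from Subsingleton.elim w 0]
    simp
  comm_b := by
    haveI : Subsingleton (((P4 k).dpow (n+1)).V1) :=
      (inferInstance : Subsingleton (Fin (n+1) → Fin 0 → k))
    haveI : Subsingleton (((P4 k).dpow (n+1)).V2) :=
      (inferInstance : Subsingleton (Fin (n+1) → Fin 0 → k))
    haveI : Subsingleton (((P4 k).dpow (n+1)).V3) :=
      (inferInstance : Subsingleton (Fin (n+1) → Fin 0 → k))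
    apply LinearMap.ext
    intro w
    rw [show w = 0 from Subsingleton.elim w 0]
    simp
  comm_c := by
    haveI : Subsingleton (((P4 k).dpow (n+1)).V1) :=
      (inferInstance : Subsingleton (Fin (n+1) → Fin 0 → k))
    haveI : Subsingleton (((P4 k).dpow (n+1)).V2) :=
      (inferInstance : Subsingleton (Fin (n+1) → Fin 0 → k))
    haveI : Subsingleton (((P4 k).dpow (n+1)).V3) :=
      (inferInstance : Subsingleton (Fin (n+1) → Fin 0 → k))
    apply LinearMap.ext
    intro w
    rw [show w = 0 from Subsingleton.elim w 0]
    simp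
  comm_d := by
    haveI : Subsingleton (((P4 k).dpow (n+1)).V1) :=
      (inferInstance : Subsingleton (Fin (n+1) → Fin 0 → k))
    haveI : Subsingleton (((P4 k).dpow (n+1)).V2) :=
      (inferInstance : Subsingleton (Fin (n+1) → Fin 0 → k))
    haveI : Subsingleton (((P4 k).dpow (n+1)).V3) :=
      (inferInstance : Subsingleton (Fin (n+1) → Fin 0 → k))
    apply LinearMap.ext
    intro w
    rw [show w = 0 from Subsingleton.elim w 0]
    simp

/-- The map `P₂ ⊕ P₃ ⊕ P₁ⁿ → M`. -/
def ggHom : QHom ((P2 k).dsum ((P3 k).dsum ((P1 k).dpow n))) (MM k n) where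
  f1 := gg1 k n
  f2 := gg2 k n
  f3 := gg3 k n
  f4 := gg4 k n
  comm_a := LinearMap.ext fun p => rfl
  comm_b := LinearMap.ext fun p => rfl
  comm_c := by
    apply LinearMap.ext
    intro p
    show (Fin.snoc (fun i => p.2.2 i) p.1 : Fin (n+1) → k)
        + (Fin.cons (0:k) (fun _ : Fin n => (0:k)) : Fin (n+1) → k)
        = (Fin.snoc p.2.2 p.1 : Fin (n+1) → k)
    rw [cons_zero_zero, add_zero]
  comm_d := by
    apply LinearMap.ext
    intro p
    show (Fin.snoc (fun _ : Fin n => (0:k)) (0:k) : Fin (n+1) → k)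
        + (Fin.cons p.2.1 (fun i => p.2.2 i) : Fin (n+1) → k)
        = (Fin.cons p.2.1 p.2.2 : Fin (n+1) → k)
    rw [snoc_zero_zero, zero_add]

lemma ff4_inj : Function.Injective ⇑(ff4 k n) := by
  intro w w' h
  funext mm
  refine Fin.lastCases ?_ (fun i => ?_) mm
  · exact congrArg Prod.fst h
  · exact congrArg (fun q => (q.2.2 i).1) h

lemma gg1_inj : Function.Injective ⇑(gg1 k n) := by
  rintro ⟨a, b, c⟩ ⟨a', b', c'⟩ h
  simp only [Prod.mk.injEq]
  exact ⟨Subsingleton.elim _ _, Subsingleton.elim _ _, h⟩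

lemma gg2_inj : Function.Injective ⇑(gg2 k n) := by
  rintro ⟨t, z, x⟩ ⟨t', z', x'⟩ h
  have h0 : (Fin.snoc x t : Fin (n+1) → k) = Fin.snoc x' t' := h
  have ht : t = t' := by
    have := congrFun h0 (Fin.last n)
    simpa using this
  have hx : x = x' := by
    funext i
    have := congrFun h0 i.castSucc
    simpa using this
  simp only [Prod.mk.injEq]
  exact ⟨ht, Subsingleton.elim _ _, hx⟩

lemma gg3_inj : Function.Injective ⇑(gg3 k n) := by
  rintro ⟨z, u, x⟩ ⟨z', u', x'⟩ h
  have h0 : (Fin.cons u x : Fin (n+1) → k) = Fin.cons u' x' := h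
  have hu : u = u' := by
    have := congrFun h0 0
    simpa using this
  have hx : x = x' := by
    funext i
    have := congrFun h0 i.succ
    simpa using this
  simp only [Prod.mk.injEq]
  exact ⟨Subsingleton.elim _ _, hu, hx⟩

lemma gg1_surj : Function.Surjective ⇑(gg1 k n) := fun x => ⟨(0, (0, x)), rfl⟩

lemma gg2_surj : Function.Surjective ⇑(gg2 k n) := by
  intro v
  exact ⟨(v (Fin.last n), (0, fun i => v i.castSucc)), Fin.snoc_init_self v⟩

lemma gg3_surj : Function.Surjective ⇑(gg3 k n) := by
  intro v
  exact ⟨(0, (v 0, fun i => v i.succ)), Fin.cons_self_tail v⟩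

lemma gg4_surj : Function.Surjective ⇑(gg4 k n) := by
  intro v
  refine ⟨(v (Fin.last n), (0, fun i => (v i.castSucc, 0))), ?_⟩
  show (Fin.snoc (fun i => v i.castSucc) (v (Fin.last n)) : Fin (n+1) → k)
      + (Fin.cons (0:k) (fun _ : Fin n => (0:k)) : Fin (n+1) → k) = v
  rw [cons_zero_zero, add_zero]
  exact Fin.snoc_init_self v

lemma bot_helper {A B C : Type} [AddCommGroup A] [AddCommGroup B] [AddCommGroup C]
    [Module k A] [Module k B] [Module k C] (f : A →ₗ[k] B) (g : B →ₗ[k] C)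
    (hf : ∀ a, f a = 0) (hg : Function.Injective g) :
    LinearMap.range f = LinearMap.ker g := by
  apply le_antisymm
  · rintro y ⟨w, rfl⟩
    simp [LinearMap.mem_ker, hf]
  · intro y hy
    have hy0 : y = 0 := hg (by rw [map_zero]; exact LinearMap.mem_ker.mp hy)
    rw [hy0]
    exact Submodule.zero_mem _

lemma gg4_ff4 : ∀ w, gg4 k n (ff4 k n w) = 0 := by
  intro w
  show (Fin.snoc (fun i => w i.castSucc) (w (Fin.last n)) : Fin (n+1) → k)
      + (Fin.cons (-(w 0)) (fun i => -(w i.succ)) : Fin (n+1) → k) = 0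
  have h1 : (Fin.snoc (fun i => w i.castSucc) (w (Fin.last n)) : Fin (n+1) → k) = w :=
    Fin.snoc_init_self w
  have h2 : (Fin.cons (-(w 0)) (fun i => -(w i.succ)) : Fin (n+1) → k) = -w := by
    funext mm
    refine Fin.cases ?_ (fun i => ?_) mm <;> simp
  rw [h1, h2, add_neg_cancel]

lemma range_ff4 : LinearMap.range (ff4 k n) = LinearMap.ker (gg4 k n) := by
  have hle : LinearMap.range (ff4 k n) ≤ LinearMap.ker (gg4 k n) :=
    LinearMap.range_le_ker_iff.mpr (LinearMap.ext (gg4_ff4 k n))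
  have hdom : Module.finrank k (k × (k × (Fin n → k × k))) = 2 * n + 2 := by
    simp [Module.finrank_prod, Module.finrank_pi_fintype, Module.finrank_self,
      Finset.sum_const, Fin.sum_univ_eq_sum_range]
    ring
  have hrange : Module.finrank k (LinearMap.range (ff4 k n)) = n + 1 := by
    rw [LinearMap.finrank_range_of_inj (ff4_inj k n)]
    exact Module.finrank_fin_fun k
  have hker : Module.finrank k (LinearMap.ker (gg4 k n)) = n + 1 := by
    have hadd := LinearMap.finrank_range_add_finrank_ker (gg4 k n)
    rw [LinearMap.range_eq_top.mpr (gg4_surj k n), finrank_top] at hadd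
    rw [hdom] at hadd
    have hcod : Module.finrank k (Fin (n+1) → k) = n + 1 := Module.finrank_fin_fun k
    rw [hcod] at hadd
    omega
  exact (Submodule.eq_of_le_of_finrank_le hle (by rw [hrange, hker])).symm ▸ rfl

lemma ses : QShortExact (ffHom k n) (ggHom k n) := by
  haveI : Subsingleton (((P4 k).dpow (n+1)).V1) :=
    (inferInstance : Subsingleton (Fin (n+1) → Fin 0 → k))
  haveI : Subsingleton (((P4 k).dpow (n+1)).V2) :=
    (inferInstance : Subsingleton (Fin (n+1) → Fin 0 → k))
  haveI : Subsingleton (((P4 k).dpow (n+1)).V3) :=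
    (inferInstance : Subsingleton (Fin (n+1) → Fin 0 → k))
  refine ⟨⟨?_, ?_, ?_, ?_⟩, ⟨?_, ?_, ?_, ?_⟩, ?_, ?_, ?_, ?_⟩
  · intro a b _; exact Subsingleton.elim a b
  · intro a b _; exact Subsingleton.elim a b
  · intro a b _; exact Subsingleton.elim a b
  · exact ff4_inj k n
  · exact gg1_surj k n
  · exact gg2_surj k n
  · exact gg3_surj k n
  · exact gg4_surj k n
  · exact bot_helper k _ _ (fun a => rfl) (gg1_inj k n)
  · exact bot_helper k _ _ (fun a => rfl) (gg2_inj k n)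
  · exact bot_helper k _ _ (fun a => rfl) (gg3_inj k n)
  · exact range_ff4 k n

end Stmt7Aux


/-- there is an indecomposable representation `M` of `Q` with the
given dimension vector together with a short exact sequence as indicated. -/
theorem stmt7 (k : Type) [Field k] (n : ℕ) :
    ∃ M : QRep k, M.Indecomposable ∧
      Module.finrank k M.V1 = n ∧ Module.finrank k M.V2 = n+1 ∧
      Module.finrank k M.V3 = n+1 ∧ Module.finrank k M.V4 = n+1 ∧
      ∃ (f : QHom ((P4 k).dpow (n+1)) ((P2 k).dsum ((P3 k).dsum ((P1 k).dpow n)))) (g : QHom ((P2 k).dsum ((P3 k).dsum ((P1 k).dpow n))) M), QShortExact f g := by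
  refine ⟨Stmt7Aux.MM k n, Stmt7Aux.MM_indec n, ?_, ?_, ?_, ?_,
    Stmt7Aux.ffHom k n, Stmt7Aux.ggHom k n, Stmt7Aux.ses k n⟩
  · exact Module.finrank_fin_fun k
  · exact Module.finrank_fin_fun k
  · exact Module.finrank_fin_fun k
  · exact Module.finrank_fin_fun k
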